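/- arXiv:1912.04175 — 3 statements merged into one kernel-verified Lean document; each statement's English description precedes it below -/
import Mathlib

section
/- Let X be a nonnegative random variable with continuous distribution function F admitting a density f and with E[X] < ∞. Let W : [0,1] → ℝ be a bounded measurable function and K(u) = ∫_u^1 (W(v) − 1)dv. Let I : [0,∞) → ℝ be absolutely continuous with I(0) = 0 and derivative I′(t) ∈ [0,1] for almost every t. Then E[I(X)·(W(F(X)) − 1)] = ∫_0^∞ K(F(t))·I′(t) dt; i.e., the expected reinsurer surplus π_I − E{I(X)} under the premium π_I = E{I(X)W(F(X))} equals ∫_0^∞ K(F(t)) dI(t). -/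
open MeasureTheory intervalIntegral

section Aux

open Set Filter Topology

variable (μ : Measure ℝ) [IsProbabilityMeasure μ]

/-- Auxiliary: the CDF of an absolutely continuous probability measure is continuous. -/
lemma aux_cdf_cont (f : ℝ → ℝ) (hf : Measurable f) (hfnonneg : ∀ x, 0 ≤ f x)
    (hdens : μ = volume.withDensity (fun x => ENNReal.ofReal (f x)))
    (F : ℝ → ℝ) (hFtoReal : ∀ x, F x = (μ (Iic x)).toReal) :
    Continuous F := by
  have hlint : ∫⁻ x, ENNReal.ofReal (f x) = 1 := by
    have h := measure_univ (μ := μ)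
    rwa [hdens, withDensity_apply _ MeasurableSet.univ, Measure.restrict_univ] at h
  have hfint : Integrable f volume := by
    refine ⟨hf.aestronglyMeasurable, ?_⟩
    rw [hasFiniteIntegral_iff_ofReal (ae_of_all _ hfnonneg), hlint]
    exact ENNReal.one_lt_top
  have hdiff : ∀ a b : ℝ, a ≤ b → F b = F a + ∫ t in a..b, f t := by
    intro a b hab
    have h1 : μ (Iic b) = μ (Iic a) + μ (Ioc a b) := by
      rw [← measure_union (Iic_disjoint_Ioc le_rfl) measurableSet_Ioc,
        Iic_union_Ioc_eq_Iic hab]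
    have h2 : (μ (Ioc a b)).toReal = ∫ t in Ioc a b, f t := by
      rw [hdens, withDensity_apply _ measurableSet_Ioc,
        integral_eq_lintegral_of_nonneg_ae (ae_of_all _ hfnonneg)
          hf.aestronglyMeasurable.restrict]
    rw [hFtoReal a, hFtoReal b, h1,
      ENNReal.toReal_add (measure_ne_top _ _) (measure_ne_top _ _),
      intervalIntegral.integral_of_le hab, ← h2]
  have hFprim : ∀ x, F x = F 0 + ∫ t in (0:ℝ)..x, f t := by
    intro x
    rcases le_total 0 x with hx | hx
    · exact hdiff 0 x hx
    · have h := hdiff x 0 hx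
      rw [intervalIntegral.integral_symm]
      linarith
  have h : Continuous fun b => ∫ t in (0:ℝ)..b, f t := hfint.continuous_primitive 0
  have hFe : F = fun x => F 0 + ∫ t in (0:ℝ)..x, f t := funext hFprim
  rw [hFe]
  exact continuous_const.add h

/-- Auxiliary: facts about a continuous CDF `F` of an absolutely continuous probability
measure `μ` on `ℝ`: the pushforward of `μ` under `F` is uniform on `(0,1]`. -/
lemma aux_map_cdf (f : ℝ → ℝ) (hf : Measurable f) (hfnonneg : ∀ x, 0 ≤ f x)
    (hdens : μ = volume.withDensity (fun x => ENNReal.ofReal (f x)))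
    (F : ℝ → ℝ) (hFtoReal : ∀ x, F x = (μ (Iic x)).toReal)
    (hFneg : ∀ x, x < 0 → F x = 0) :
    Measure.map F μ = volume.restrict (Ioc 0 1) := by
  have hμIic' : ∀ x, μ (Iic x) = ENNReal.ofReal (F x) := fun x => by
    rw [hFtoReal, ENNReal.ofReal_toReal (measure_ne_top μ _)]
  have hFnonneg : ∀ x, 0 ≤ F x := fun x => by rw [hFtoReal]; exact ENNReal.toReal_nonneg
  have hFle1 : ∀ x, F x ≤ 1 := fun x => by
    rw [hFtoReal]
    simpa using ENNReal.toReal_mono ENNReal.one_ne_top (prob_le_one (μ := μ) (s := Iic x))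
  have hFmono : Monotone F := fun a b hab => by
    rw [hFtoReal, hFtoReal]
    exact ENNReal.toReal_mono (measure_ne_top _ _) (measure_mono (Iic_subset_Iic.2 hab))
  have hFcont : Continuous F := aux_cdf_cont μ f hf hfnonneg hdens F hFtoReal
  have hFmeas : Measurable F := hFcont.measurable
  have hFtop : Tendsto F atTop (𝓝 1) := by
    have h1 : Tendsto (fun x => μ (Iic x)) atTop (𝓝 (μ univ)) := tendsto_measure_Iic_atTop μ
    have h2 := (ENNReal.tendsto_toReal (measure_ne_top μ univ)).comp h1
    have hFe : F = fun x => (μ (Iic x)).toReal := funext hFtoReal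
    rw [hFe]
    simpa [measure_univ, Function.comp_def] using h2
  have : IsProbabilityMeasure (Measure.map F μ) :=
    Measure.isProbabilityMeasure_map hFmeas.aemeasurable
  refine Measure.ext_of_Iic _ _ (fun u => ?_)
  rw [Measure.map_apply hFmeas measurableSet_Iic, Measure.restrict_apply' measurableSet_Ioc]
  have hset : Iic u ∩ Ioc 0 1 = Ioc 0 (min u 1) := by
    ext x
    simp only [mem_inter_iff, mem_Iic, mem_Ioc, le_min_iff]
    constructor
    · rintro ⟨h1, h2, h3⟩; exact ⟨h2, h1, h3⟩
    · rintro ⟨h1, h2, h3⟩; exact ⟨h2, h1, h3⟩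
  rw [hset, Real.volume_Ioc, sub_zero]
  rcases lt_or_ge u 0 with hu | hu
  · have hempty : F ⁻¹' Iic u = ∅ :=
      eq_empty_iff_forall_notMem.2 fun x hx => ((hFnonneg x).trans_lt (lt_of_le_of_lt hx hu)).false
    rw [hempty, min_eq_left (hu.le.trans zero_le_one)]
    simp [ENNReal.ofReal_eq_zero.2 hu.le]
  rcases lt_or_ge u 1 with hu1 | hu1
  · -- main case `0 ≤ u < 1`
    rw [min_eq_left hu1.le]
    set S := F ⁻¹' Iic u with hS
    have hSclosed : IsClosed S := isClosed_Iic.preimage hFcont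
    have hSne : S.Nonempty := ⟨-1, by
      simp only [hS, mem_preimage, mem_Iic]
      rw [hFneg (-1) (by norm_num)]; exact hu⟩
    have hSbdd : BddAbove S := by
      obtain ⟨x₁, hx₁⟩ := (hFtop.eventually (eventually_gt_nhds hu1)).exists
      refine ⟨x₁, fun x hx => ?_⟩
      by_contra hlt
      exact absurd ((hFmono (not_le.1 hlt).le).trans hx) (not_le.2 hx₁)
    set s := sSup S with hs
    have hsS : s ∈ S := hSclosed.csSup_mem hSne hSbdd
    have hSeq : S = Iic s := by
      ext x
      constructor
      · exact fun hx => le_csSup hSbdd hx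
      · intro hx
        exact (hFmono hx).trans hsS
    have hFs : F s = u := by
      refine le_antisymm hsS ?_
      have htd : Filter.Tendsto F (𝓝[>] s) (𝓝 (F s)) :=
        (hFcont.tendsto s).mono_left nhdsWithin_le_nhds
      refine ge_of_tendsto htd ?_
      filter_upwards [self_mem_nhdsWithin] with y hy
      by_contra hcon
      exact absurd (le_csSup hSbdd (le_of_not_ge hcon : F y ≤ u)) (not_le.2 hy)
    rw [hSeq, hμIic', hFs]
  · rw [min_eq_right hu1]
    have huniv : F ⁻¹' Iic u = univ :=
      eq_univ_of_forall fun x => (hFle1 x).trans hu1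
    rw [huniv]
    simp [measure_univ]

end Aux

/-- Let `X ≥ 0` be integrable with continuous distribution function `F`
admitting a density `f`, let `W : [0,1] → ℝ` be bounded measurable with
`K u = ∫_u^1 (W v − 1) dv`, and let `I` be absolutely continuous with `I 0 = 0` and
derivative `i = I′` taking values in `[0,1]` (so `I x = ∫_0^x i t dt`). Then
`E[I(X) (W(F(X)) − 1)] = ∫_0^∞ K(F t) I′(t) dt`, i.e. the expected reinsurer surplus
`π_I − E[I(X)]` under the premium `π_I = E[I(X) W(F(X))]` equals `∫_0^∞ K(F t) dI(t)`. -/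
theorem reinsurer_surplus_integral_representation
    {Ω : Type*} [MeasurableSpace Ω] (P : Measure Ω) [IsProbabilityMeasure P]
    (X : Ω → ℝ) (hX : Measurable X) (hXnonneg : ∀ ω, 0 ≤ X ω)
    (hXint : Integrable X P)
    (f : ℝ → ℝ) (hf : Measurable f) (hfnonneg : ∀ x, 0 ≤ f x)
    (hdens : Measure.map X P = volume.withDensity (fun x => ENNReal.ofReal (f x)))
    (F : ℝ → ℝ) (hF : ∀ x, F x = (P {ω | X ω ≤ x}).toReal)
    (W : ℝ → ℝ) (hW : Measurable W) (Cw : ℝ) (hWbd : ∀ u, |W u| ≤ Cw)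
    (K : ℝ → ℝ) (hK : ∀ u, K u = ∫ v in u..1, (W v - 1))
    (i : ℝ → ℝ) (hi : Measurable i) (hi01 : ∀ t, i t ∈ Set.Icc (0 : ℝ) 1)
    (I : ℝ → ℝ) (hI : ∀ x, I x = ∫ t in (0 : ℝ)..x, i t) :
    ∫ ω, I (X ω) * (W (F (X ω)) - 1) ∂P = ∫ t in Set.Ioi (0 : ℝ), K (F t) * i t := by
  classical
  set μ : Measure ℝ := volume.withDensity (fun x => ENNReal.ofReal (f x)) with hμdef
  have hXae : AEMeasurable X P := hX.aemeasurable
  have hProb : IsProbabilityMeasure μ := hdens ▸ Measure.isProbabilityMeasure_map hXae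
  have hμIic : ∀ x, μ (Set.Iic x) = P {ω | X ω ≤ x} := by
    intro x
    rw [← hdens, Measure.map_apply hX measurableSet_Iic]
    rfl
  have hFtoReal : ∀ x, F x = (μ (Set.Iic x)).toReal := fun x => by rw [hμIic, hF]
  have hμIic' : ∀ x, μ (Set.Iic x) = ENNReal.ofReal (F x) := fun x => by
    rw [hFtoReal, ENNReal.ofReal_toReal (measure_ne_top μ _)]
  have hFneg : ∀ x, x < 0 → F x = 0 := by
    intro x hx
    have hempty : {ω | X ω ≤ x} = ∅ :=
      Set.eq_empty_iff_forall_notMem.2 fun ω h => ((hXnonneg ω).trans h).not_gt hx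
    rw [hF, hempty]
    simp
  have hFnonneg : ∀ x, 0 ≤ F x := fun x => by rw [hFtoReal]; exact ENNReal.toReal_nonneg
  have hFle1 : ∀ x, F x ≤ 1 := fun x => by
    rw [hFtoReal]
    simpa using ENNReal.toReal_mono ENNReal.one_ne_top (prob_le_one (μ := μ) (s := Set.Iic x))
  have hFmono : Monotone F := fun a b hab => by
    rw [hFtoReal, hFtoReal]
    exact ENNReal.toReal_mono (measure_ne_top _ _) (measure_mono (Set.Iic_subset_Iic.2 hab))
  have hmap : Measure.map F μ = volume.restrict (Set.Ioc 0 1) :=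
    aux_map_cdf μ f hf hfnonneg hμdef F hFtoReal hFneg
  have hFcont : Continuous F := aux_cdf_cont μ f hf hfnonneg hμdef F hFtoReal
  have hFmeas : Measurable F := hFcont.measurable
  -- null set computations
  have hIocnull : ∀ m t : ℝ, m ≤ t → F m = F t → μ (Set.Ioc m t) = 0 := by
    intro m t hmt hFmt
    rw [← Set.Iic_sdiff_Iic,
      measure_diff (Set.Iic_subset_Iic.2 hmt) nullMeasurableSet_Iic (measure_ne_top μ _),
      hμIic', hμIic', hFmt, tsub_self]
  have hsing : ∀ m : ℝ, μ {m} = 0 := by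
    intro m
    rw [hμdef, withDensity_apply _ (measurableSet_singleton m),
      Measure.restrict_eq_zero.2 (by simp), lintegral_zero_measure]
  -- the set where `F ≥ F t` but `x < t` is `μ`-null
  have hnull : ∀ t : ℝ, μ ({x | F t ≤ F x} \ Set.Ici t) = 0 := by
    intro t
    set D := ({x | F t ≤ F x} \ Set.Ici t) with hDdef
    have hD : ∀ x ∈ D, F x = F t ∧ x < t := by
      intro x hx
      have hxt : x < t := not_le.1 hx.2
      exact ⟨le_antisymm (hFmono hxt.le) hx.1, hxt⟩
    by_cases hne : D.Nonempty
    swap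
    · rw [Set.not_nonempty_iff_eq_empty.1 hne]
      exact measure_empty
    by_cases hneg : ∃ x ∈ D, x < 0
    · obtain ⟨x₀, hx₀D, hx₀⟩ := hneg
      have hc0 : F t = 0 := ((hD x₀ hx₀D).1).symm.trans (hFneg x₀ hx₀)
      have hIt : μ (Set.Iic t) = 0 := by rw [hμIic', hc0]; simp
      exact measure_mono_null (fun x hx => (hD x hx).2.le) hIt
    · push_neg at hneg
      have hbdd : BddBelow D := ⟨0, fun x hx => hneg x hx⟩
      set m := sInf D with hm
      obtain ⟨x₀, hx₀⟩ := hne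
      have hmt : m ≤ t := (csInf_le hbdd hx₀).trans (hD x₀ hx₀).2.le
      have hFm_le : F m ≤ F t := (hFmono (csInf_le hbdd hx₀)).trans_eq (hD x₀ hx₀).1
      have hFm_ge : F t ≤ F m := by
        have htd : Filter.Tendsto F (nhdsWithin m (Set.Ioi m)) (nhds (F m)) :=
          (hFcont.tendsto m).mono_left nhdsWithin_le_nhds
        refine ge_of_tendsto htd ?_
        filter_upwards [self_mem_nhdsWithin] with y hy
        obtain ⟨x, hxD, hxy⟩ := (csInf_lt_iff hbdd ⟨x₀, hx₀⟩).1 hy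
        exact (hD x hxD).1 ▸ hFmono hxy.le
      have hFm : F m = F t := le_antisymm hFm_le hFm_ge
      have hsub : D ⊆ {m} ∪ Set.Ioc m t := by
        intro x hx
        rcases eq_or_lt_of_le (csInf_le hbdd hx) with h | h
        · exact Or.inl (by simp [← h, hm])
        · exact Or.inr ⟨h, (hD x hx).2.le⟩
      refine measure_mono_null hsub ?_
      refine le_antisymm ((measure_union_le _ _).trans ?_) zero_le
      rw [hsing m, hIocnull m t hmt hFm]
      simp
  -- the substitution step
  have hIci : ∀ t : ℝ, ∫ x in Set.Ici t, (W (F x) - 1) ∂μ = K (F t) := by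
    intro t
    have haeeq : Set.Ici t =ᵐ[μ] {x | F t ≤ F x} := by
      rw [MeasureTheory.ae_eq_set]
      constructor
      · have hem : Set.Ici t \ {x | F t ≤ F x} = ∅ :=
          Set.eq_empty_iff_forall_notMem.2 fun x hx => hx.2 (hFmono hx.1)
        rw [hem]; exact measure_empty
      · exact hnull t
    rw [setIntegral_congr_set haeeq]
    have hpre : {x | F t ≤ F x} = F ⁻¹' Set.Ici (F t) := rfl
    have hmapint := setIntegral_map (μ := μ) (s := Set.Ici (F t))
      (f := fun v => W v - 1) (g := F) measurableSet_Ici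
      ((hW.sub measurable_const).aestronglyMeasurable) hFmeas.aemeasurable
    rw [hpre, ← hmapint, hmap, Measure.restrict_restrict measurableSet_Ici]
    have hseteq : (Set.Ici (F t) ∩ Set.Ioc 0 1 : Set ℝ) =ᵐ[volume] (Set.Ioc (F t) 1 : Set ℝ) := by
      rw [MeasureTheory.ae_eq_set]
      constructor
      · refine measure_mono_null (fun x hx => ?_) (measure_singleton (F t))
        obtain ⟨⟨h1, h2, h3⟩, h4⟩ := hx
        simp only [Set.mem_Ioc, not_and, not_le] at h4
        have : ¬ F t < x := fun hc => absurd h3 (not_le.2 (h4 hc))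
        simpa using le_antisymm (not_lt.1 this) h1
      · refine measure_mono_null (fun x hx => ?_) (measure_empty (μ := volume))
        obtain ⟨⟨h1, h2⟩, h3⟩ := hx
        exact absurd ⟨h1.le, (hFnonneg t).trans_lt h1, h2⟩ h3
    rw [setIntegral_congr_set hseteq, hK, intervalIntegral.integral_of_le (hFle1 t)]
  -- measurability and integrability for the Fubini step
  set h : ℝ → ℝ := fun x => W (F x) - 1 with hh
  have hhmeas : Measurable h := (hW.comp hFmeas).sub measurable_const
  have hCw : 0 ≤ Cw := (abs_nonneg _).trans (hWbd 0)
  have hhbd : ∀ x, |h x| ≤ Cw + 1 := by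
    intro x
    rw [hh]
    calc |W (F x) - 1| ≤ |W (F x)| + |(1:ℝ)| := abs_sub _ _
      _ ≤ Cw + 1 := by have := hWbd (F x); simp only [abs_one]; linarith
  set φ : ℝ → ℝ → ℝ := fun x t => (Set.Ioc 0 x).indicator i t * h x with hφ
  set S : Set (ℝ × ℝ) := {p : ℝ × ℝ | p.2 ∈ Set.Ioc 0 p.1} with hSdef
  have hS : MeasurableSet S := by
    have : S = {p : ℝ × ℝ | 0 < p.2} ∩ {p : ℝ × ℝ | p.2 ≤ p.1} := by
      ext p; simp [hSdef, Set.mem_Ioc, Set.mem_setOf_eq]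
    rw [this]
    exact (measurableSet_lt measurable_const measurable_snd).inter
      (measurableSet_le measurable_snd measurable_fst)
  have huncurry : Function.uncurry φ
      = fun p : ℝ × ℝ => S.indicator (fun q => i q.2) p * h p.1 := by
    funext p
    show (Set.Ioc 0 p.1).indicator i p.2 * h p.1 = S.indicator (fun q => i q.2) p * h p.1
    by_cases hp : p ∈ S
    · rw [Set.indicator_of_mem hp, Set.indicator_of_mem (show p.2 ∈ Set.Ioc 0 p.1 from hp)]
    · rw [Set.indicator_of_notMem hp,
        Set.indicator_of_notMem (show p.2 ∉ Set.Ioc 0 p.1 from hp)]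
  have hφmeas : Measurable (Function.uncurry φ) := by
    rw [huncurry]
    exact ((hi.comp measurable_snd).indicator hS).mul (hhmeas.comp measurable_fst)
  have hSfin : (μ.prod volume) S < ⊤ := by
    rw [Measure.prod_apply hS]
    have hfib : ∀ x : ℝ, volume (Prod.mk x ⁻¹' S) = ENNReal.ofReal x := by
      intro x
      have : (Prod.mk x ⁻¹' S) = Set.Ioc 0 x := rfl
      rw [this, Real.volume_Ioc, sub_zero]
    calc ∫⁻ x, volume (Prod.mk x ⁻¹' S) ∂μ = ∫⁻ x, ENNReal.ofReal x ∂μ := by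
          exact lintegral_congr hfib
      _ = ∫⁻ ω, ENNReal.ofReal (X ω) ∂P := by
          rw [← hdens, lintegral_map ENNReal.measurable_ofReal hX]
      _ ≤ ∫⁻ ω, (‖X ω‖₊ : ENNReal) ∂P := lintegral_mono fun ω => Real.ofReal_le_enorm _
      _ < ⊤ := hXint.2
  have hgint : Integrable (fun p : ℝ × ℝ => (Cw + 1) * S.indicator (fun _ => (1:ℝ)) p)
      (μ.prod volume) := by
    refine Integrable.const_mul ?_ _
    rw [integrable_indicator_iff hS, integrableOn_const_iff]
    exact Or.inr hSfin
  have hφint : Integrable (Function.uncurry φ) (μ.prod volume) := by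
    refine Integrable.mono' hgint hφmeas.aestronglyMeasurable (ae_of_all _ fun p => ?_)
    rw [huncurry]
    show ‖S.indicator (fun q => i q.2) p * h p.1‖ ≤ (Cw + 1) * S.indicator (fun _ => (1:ℝ)) p
    by_cases hp : p ∈ S
    · rw [Set.indicator_of_mem hp, Set.indicator_of_mem hp]
      rw [Real.norm_eq_abs, abs_mul]
      have h1 : |i p.2| ≤ 1 := by
        rw [abs_of_nonneg (hi01 p.2).1]; exact (hi01 p.2).2
      have h2 : |h p.1| ≤ Cw + 1 := hhbd _
      calc |i p.2| * |h p.1| ≤ 1 * (Cw + 1) :=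
            mul_le_mul h1 h2 (abs_nonneg _) zero_le_one
        _ = (Cw + 1) * 1 := by ring
    · rw [Set.indicator_of_notMem hp, Set.indicator_of_notMem hp]
      simp
  -- μ-a.e., x ≥ 0
  have hIio : μ (Set.Iio 0) = 0 := by
    have hcover : Set.Iio (0:ℝ) ⊆ ⋃ n : ℕ, Set.Iic (-(1 / (n+1) : ℝ)) := by
      intro x hx
      obtain ⟨n, hn⟩ := exists_nat_one_div_lt (K := ℝ) (neg_pos.2 (Set.mem_Iio.1 hx))
      exact Set.mem_iUnion.2 ⟨n, by simp only [Set.mem_Iic]; linarith⟩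
    refine measure_mono_null hcover ?_
    refine le_antisymm ((measure_iUnion_le _).trans ?_) zero_le
    have hz : ∀ n : ℕ, μ (Set.Iic (-(1/(n+1):ℝ))) = 0 := by
      intro n
      rw [hμIic', hFneg _ (neg_lt_zero.mpr (by positivity))]
      simp
    have hz' : (∑' n : ℕ, μ (Set.Iic (-(1/(n+1):ℝ)))) = 0 := by
      rw [tsum_congr hz]
      simp
    exact le_of_eq hz'
  have hμpos : ∀ᵐ x ∂μ, (0:ℝ) ≤ x := by
    rw [ae_iff]
    simpa only [not_le] using (show μ {a : ℝ | a < 0} = 0 from hIio)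
  -- interval integrability of `i` and continuity of `I`
  have hiInt : ∀ a b : ℝ, IntervalIntegrable i volume a b := by
    intro a b
    refine (_root_.intervalIntegrable_const (c := (1:ℝ))).mono_fun'
      hi.aestronglyMeasurable.restrict (ae_of_all _ fun t => ?_)
    show ‖i t‖ ≤ (1:ℝ)
    rw [Real.norm_eq_abs, abs_of_nonneg (hi01 t).1]
    exact (hi01 t).2
  have hIcont : Continuous I := by
    have hIeq : I = fun x => ∫ t in (0:ℝ)..x, i t := funext hI
    rw [hIeq]
    exact intervalIntegral.continuous_primitive hiInt 0
  -- the main computation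
  have hsm : AEStronglyMeasurable (fun x => I x * h x) (Measure.map X P) :=
    (hIcont.measurable.mul hhmeas).aestronglyMeasurable
  calc ∫ ω, I (X ω) * h (X ω) ∂P
      = ∫ x, I x * h x ∂μ := by
        have hmi := integral_map hXae hsm
        rw [hdens] at hmi
        exact hmi.symm
    _ = ∫ x, (∫ t, φ x t) ∂μ := by
        refine integral_congr_ae (hμpos.mono fun x hx => ?_)
        rw [hφ]
        simp only []
        rw [MeasureTheory.integral_mul_const, MeasureTheory.integral_indicator measurableSet_Ioc,
          ← intervalIntegral.integral_of_le hx, ← hI x]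
    _ = ∫ t, (∫ x, φ x t ∂μ) := integral_integral_swap hφint
    _ = ∫ t, (Set.Ioi (0:ℝ)).indicator (fun t => K (F t) * i t) t := by
        refine integral_congr_ae (ae_of_all _ fun t => ?_)
        show (∫ x, φ x t ∂μ) = (Set.Ioi (0:ℝ)).indicator (fun s => K (F s) * i s) t
        by_cases ht : 0 < t
        · have hfe : (fun x => φ x t)
              = fun x => i t * (Set.Ici t).indicator h x := by
            funext x
            by_cases hx : t ≤ x
            · rw [hφ]
              simp only []
              rw [Set.indicator_of_mem (Set.mem_Ioc.2 ⟨ht, hx⟩),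
                Set.indicator_of_mem (Set.mem_Ici.2 hx)]
            · rw [hφ]
              simp only []
              rw [Set.indicator_of_notMem (fun hc => hx (Set.mem_Ioc.1 hc).2),
                Set.indicator_of_notMem (fun hc => hx (Set.mem_Ici.1 hc))]
              simp
          rw [hfe, MeasureTheory.integral_const_mul, MeasureTheory.integral_indicator measurableSet_Ici, hIci t,
            Set.indicator_of_mem (Set.mem_Ioi.2 ht)]
          ring
        · have hfe : (fun x => φ x t) = fun _ => (0:ℝ) := by
            funext x
            rw [hφ]
            simp only []
            rw [Set.indicator_of_notMem (fun hc => ht (Set.mem_Ioc.1 hc).1)]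
            simp
          rw [hfe, Set.indicator_of_notMem (fun hc => ht (Set.mem_Ioi.1 hc))]
          simp
    _ = ∫ t in Set.Ioi (0:ℝ), K (F t) * i t := MeasureTheory.integral_indicator measurableSet_Ioi
end

section
/- Let X be a nonnegative random variable with continuous distribution function F admitting a density and with E[X] < ∞, let W : [0,1] → ℝ be bounded measurable with K(u) = ∫_u^1 (W(v) − 1)dv, and let I_a(x) = max(x−a₁,0) − max(x−a₂,0) be the one-layer contract with 0 ≤ a₁ ≤ a₂. Then the expected reinsurer surplus satisfies E[I_a(X)·W(F(X))] − E[I_a(X)] = ∫_{a₁}^{a₂} K(F(t)) dt. -/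
open MeasureTheory intervalIntegral

/-- Layer (integral) representation of the one-layer contract. -/
lemma aux_layer (a₁ a₂ x : ℝ) (h : a₁ ≤ a₂) :
    ∫ t in Set.Ioc a₁ a₂, Set.indicator (Set.Iio x) (fun _ => (1:ℝ)) t
      = max (x - a₁) 0 - max (x - a₂) 0 := by
  rw [integral_indicator_const _ measurableSet_Iio]
  simp only [measureReal_def, Measure.restrict_apply measurableSet_Iio, smul_eq_mul, mul_one]
  rcases le_total x a₁ with hx1 | hx1
  · have : Set.Iio x ∩ Set.Ioc a₁ a₂ = ∅ := by
      ext t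
      simp only [Set.mem_inter_iff, Set.mem_Iio, Set.mem_Ioc, Set.mem_empty_iff_false, iff_false]
      rintro ⟨h1, h2, h3⟩; linarith
    rw [this, max_eq_right (by linarith), max_eq_right (by linarith)]
    simp
  · rcases le_total x a₂ with hx2 | hx2
    · have : Set.Iio x ∩ Set.Ioc a₁ a₂ = Set.Ioo a₁ x := by
        ext t
        simp only [Set.mem_inter_iff, Set.mem_Iio, Set.mem_Ioc, Set.mem_Ioo]
        exact ⟨fun ⟨h1, h2, h3⟩ => ⟨h2, h1⟩, fun ⟨h1, h2⟩ => ⟨h2, h1, by linarith⟩⟩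
      rw [this, Real.volume_Ioo, ENNReal.toReal_ofReal (by linarith),
        max_eq_left (by linarith), max_eq_right (by linarith)]
      ring
    · have hvol : volume (Set.Iio x ∩ Set.Ioc a₁ a₂) = ENNReal.ofReal (a₂ - a₁) := by
        apply le_antisymm
        · calc volume (Set.Iio x ∩ Set.Ioc a₁ a₂) ≤ volume (Set.Ioc a₁ a₂) :=
                measure_mono Set.inter_subset_right
            _ = ENNReal.ofReal (a₂ - a₁) := Real.volume_Ioc
        · calc ENNReal.ofReal (a₂ - a₁) = volume (Set.Ioo a₁ a₂) := Real.volume_Ioo.symm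
            _ ≤ volume (Set.Iio x ∩ Set.Ioc a₁ a₂) := by
                apply measure_mono
                rintro t ⟨h1, h2⟩
                exact ⟨lt_of_lt_of_le h2 hx2, h1, le_of_lt h2⟩
      rw [hvol, ENNReal.toReal_ofReal (by linarith),
        max_eq_left (by linarith), max_eq_left (by linarith)]
      ring

/-- Pointwise bound for the one-layer contract. -/
lemma aux_layer_bound (a₁ a₂ x : ℝ) (h : a₁ ≤ a₂) :
    |max (x - a₁) 0 - max (x - a₂) 0| ≤ a₂ - a₁ := by
  have e1 : max (x - a₂) 0 ≤ max (x - a₁) 0 := max_le_max (by linarith) le_rfl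
  have e2 : max (x - a₁) 0 ≤ max (x - a₂) 0 + (a₂ - a₁) := by
    rcases le_total (x - a₁) 0 with h' | h'
    · rw [max_eq_right h']
      have := le_max_right (x - a₂) 0
      linarith
    · rw [max_eq_left h']
      have := le_max_left (x - a₂) 0
      linarith
  rw [abs_le]
  constructor <;> linarith

/-- Let `X ≥ 0` be integrable with continuous distribution function `F`
admitting a density, let `W : [0,1] → ℝ` be bounded measurable with
`K u = ∫_u^1 (W v − 1) dv`, and let `I_a(x) = max(x−a₁,0) − max(x−a₂,0)` be the one-layer
contract with `0 ≤ a₁ ≤ a₂`. Then the expected reinsurer surplus satisfies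
`E[I_a(X) W(F(X))] − E[I_a(X)] = ∫_{a₁}^{a₂} K(F t) dt`. -/
theorem reinsurer_surplus_one_layer
    {Ω : Type*} [MeasurableSpace Ω] (P : Measure Ω) [IsProbabilityMeasure P]
    (X : Ω → ℝ) (hX : Measurable X) (hXnonneg : ∀ ω, 0 ≤ X ω)
    (hXint : Integrable X P)
    (f : ℝ → ℝ) (hf : Measurable f) (hfnonneg : ∀ x, 0 ≤ f x)
    (hdens : Measure.map X P = volume.withDensity (fun x => ENNReal.ofReal (f x)))
    (F : ℝ → ℝ) (hF : ∀ x, F x = (P {ω | X ω ≤ x}).toReal)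
    (W : ℝ → ℝ) (hW : Measurable W) (Cw : ℝ) (hWbd : ∀ u, |W u| ≤ Cw)
    (K : ℝ → ℝ) (hK : ∀ u, K u = ∫ v in u..1, (W v - 1))
    (a₁ a₂ : ℝ) (ha₁ : 0 ≤ a₁) (h₁₂ : a₁ ≤ a₂) :
    (∫ ω, (max (X ω - a₁) 0 - max (X ω - a₂) 0) * W (F (X ω)) ∂P) -
      (∫ ω, (max (X ω - a₁) 0 - max (X ω - a₂) 0) ∂P) = ∫ t in a₁..a₂, K (F t) := by
  -- notation
  set ν : Measure ℝ := Measure.map X P with hνdef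
  haveI hνprob : IsProbabilityMeasure ν := Measure.isProbabilityMeasure_map hX.aemeasurable
  -- basic facts about F
  have hνIic : ∀ x, ν (Set.Iic x) = ENNReal.ofReal (F x) := by
    intro x
    rw [hνdef, Measure.map_apply hX measurableSet_Iic]
    have hpre : X ⁻¹' Set.Iic x = {ω | X ω ≤ x} := rfl
    rw [hpre, hF x, ENNReal.ofReal_toReal (measure_ne_top P _)]
  have hF0 : ∀ x, 0 ≤ F x := fun x => by rw [hF]; exact ENNReal.toReal_nonneg
  have hF1 : ∀ x, F x ≤ 1 := by
    intro x
    rw [hF]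
    have h1 : P {ω | X ω ≤ x} ≤ 1 := prob_le_one
    calc (P {ω | X ω ≤ x}).toReal ≤ (1 : ENNReal).toReal :=
          ENNReal.toReal_mono ENNReal.one_ne_top h1
      _ = 1 := by simp
  have hFmono : Monotone F := by
    intro x y hxy
    rw [hF, hF]
    exact ENNReal.toReal_mono (measure_ne_top _ _)
      (measure_mono fun ω (h : X ω ≤ x) => le_trans h hxy)
  have hFmeas : Measurable F := hFmono.measurable
  -- f is integrable
  have hfl : (∫⁻ x, ENNReal.ofReal (f x)) = 1 := by
    have h1 : ν Set.univ = 1 := measure_univ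
    rw [hdens] at h1
    rwa [withDensity_apply _ MeasurableSet.univ, Measure.restrict_univ] at h1
  have hfint : Integrable f := by
    refine ⟨hf.aestronglyMeasurable, ?_⟩
    rw [hasFiniteIntegral_iff_ofReal (Filter.Eventually.of_forall hfnonneg), hfl]
    exact ENNReal.one_lt_top
  -- F is a primitive of f, hence continuous
  have hkey : ∀ a b : ℝ, a ≤ b → F b - F a = ∫ u in Set.Ioc a b, f u := by
    intro a b hab
    have hIO : Integrable f (volume.restrict (Set.Ioc a b)) := hfint.restrict
    have h1 : ν (Set.Ioc a b) = ENNReal.ofReal (∫ u in Set.Ioc a b, f u) := by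
      rw [hdens, withDensity_apply _ measurableSet_Ioc]
      exact (ofReal_integral_eq_lintegral_ofReal hIO
        (Filter.Eventually.of_forall fun x => hfnonneg x)).symm
    have h2 : ν (Set.Ioc a b) = ν (Set.Iic b) - ν (Set.Iic a) := by
      rw [← Set.Iic_sdiff_Iic,
        measure_diff (Set.Iic_subset_Iic.2 hab) nullMeasurableSet_Iic (measure_ne_top _ _)]
    rw [h2, hνIic, hνIic, ← ENNReal.ofReal_sub _ (hF0 a)] at h1
    have hnn1 : 0 ≤ ∫ u in Set.Ioc a b, f u :=
      setIntegral_nonneg measurableSet_Ioc fun x _ => hfnonneg x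
    have hnn2 : 0 ≤ F b - F a := sub_nonneg.2 (hFmono hab)
    exact (ENNReal.ofReal_eq_ofReal_iff hnn2 hnn1).1 h1
  have hFprim : ∀ y, F y = F 0 + ∫ u in (0:ℝ)..y, f u := by
    intro y
    rcases le_total 0 y with h | h
    · have := hkey 0 y h
      rw [intervalIntegral.integral_of_le h]
      linarith
    · have := hkey y 0 h
      rw [intervalIntegral.integral_symm, intervalIntegral.integral_of_le h]
      linarith
  have hFcont : Continuous F := by
    have h1 : Continuous fun y => F 0 + ∫ u in (0:ℝ)..y, f u :=
      continuous_const.add (hfint.continuous_primitive 0)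
    have h2 : F = fun y => F 0 + ∫ u in (0:ℝ)..y, f u := funext hFprim
    rw [h2]; exact h1
  -- F tends to 1 at infinity
  have hFtop : Filter.Tendsto F Filter.atTop (nhds 1) := by
    have h1 : Filter.Tendsto (fun x => ν (Set.Iic x)) Filter.atTop (nhds (ν Set.univ)) :=
      tendsto_measure_Iic_atTop ν
    rw [measure_univ] at h1
    have h2 := (ENNReal.tendsto_toReal ENNReal.one_ne_top).comp h1
    simp only [Function.comp_def, ENNReal.toReal_one] at h2
    refine h2.congr fun x => ?_
    rw [hνIic, ENNReal.toReal_ofReal (hF0 x)]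
  have hFneg : F (-1) = 0 := by
    rw [hF]
    have : {ω | X ω ≤ (-1:ℝ)} = ∅ := by
      ext ω
      simp only [Set.mem_setOf_eq, Set.mem_empty_iff_false, iff_false, not_le]
      linarith [hXnonneg ω]
    rw [this]; simp
  -- probability integral transform: F(X) is uniform on (0,1]
  have hmapF : Measure.map F ν = volume.restrict (Set.Ioc 0 1) := by
    haveI : IsProbabilityMeasure (Measure.map F ν) :=
      Measure.isProbabilityMeasure_map hFmeas.aemeasurable
    refine Measure.ext_of_Iic _ _ (fun a => ?_)
    rw [Measure.map_apply hFmeas measurableSet_Iic,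
      Measure.restrict_apply measurableSet_Iic]
    have hset : Set.Iic a ∩ Set.Ioc 0 1 = Set.Ioc 0 (min a 1) := by
      ext t
      simp only [Set.mem_inter_iff, Set.mem_Iic, Set.mem_Ioc, le_min_iff]
      tauto
    rw [hset, Real.volume_Ioc]
    rcases lt_or_ge a 0 with ha | ha
    · have hemp : F ⁻¹' Set.Iic a = ∅ := by
        ext x
        simp only [Set.mem_preimage, Set.mem_Iic, Set.mem_empty_iff_false, iff_false, not_le]
        linarith [hF0 x]
      rw [hemp, measure_empty]
      symm
      rw [ENNReal.ofReal_eq_zero]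
      have : min a 1 ≤ a := min_le_left _ _
      linarith
    · rcases le_or_gt 1 a with ha1 | ha1
      · have huniv : F ⁻¹' Set.Iic a = Set.univ :=
          Set.eq_univ_of_forall fun x => le_trans (hF1 x) ha1
        rw [huniv, measure_univ, min_eq_right ha1]
        norm_num
      · -- 0 ≤ a < 1
        set S := F ⁻¹' Set.Iic a with hSdef
        have hSne : S.Nonempty := ⟨-1, by simp only [hSdef, Set.mem_preimage, Set.mem_Iic, hFneg]; exact ha⟩
        have hbdS : BddAbove S := by
          obtain ⟨x₀, hx₀⟩ : ∃ x₀, a < F x₀ :=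
            (hFtop.eventually (eventually_gt_nhds ha1)).exists
          refine ⟨x₀, fun x hx => ?_⟩
          by_contra hc
          push_neg at hc
          exact absurd (le_trans (hFmono hc.le) hx) (not_le.2 hx₀)
        have hSclosed : IsClosed S := IsClosed.preimage hFcont isClosed_Iic
        have hsS : sSup S ∈ S := hSclosed.csSup_mem hSne hbdS
        have hSIic : S = Set.Iic (sSup S) := by
          ext x
          constructor
          · exact fun hx => le_csSup hbdS hx
          · exact fun hx => le_trans (hFmono hx) hsS
        have hFs : F (sSup S) = a := by
          refine le_antisymm hsS ?_
          have hev : ∀ᶠ x in nhdsWithin (sSup S) (Set.Ioi (sSup S)), a ≤ F x := by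
            filter_upwards [self_mem_nhdsWithin] with x hx
            by_contra hc
            push_neg at hc
            exact absurd (le_csSup hbdS hc.le) (not_le.2 hx)
          exact ge_of_tendsto (hFcont.continuousAt.tendsto.mono_left nhdsWithin_le_nhds) hev
        rw [hSIic, hνIic, hFs, min_eq_left ha1.le, sub_zero]
  -- the exceptional set is null
  have nullA : ∀ t, ν {x | t < x ∧ F x = F t} = 0 := by
    intro t
    set A := {x | t < x ∧ F x = F t} with hAdef
    rcases A.eq_empty_or_nonempty with hA | hA
    · rw [hA]; simp
    by_cases hbd : BddAbove A
    · have hFsA : F (sSup A) = F t := by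
        have hcl : sSup A ∈ closure A := csSup_mem_closure hA hbd
        have hsub : closure A ⊆ {x | F x = F t} :=
          closure_minimal (fun x hx => hx.2) (isClosed_eq hFcont continuous_const)
        exact hsub hcl
      obtain ⟨x₁, hx₁⟩ := hA
      have hts : t ≤ sSup A := le_trans hx₁.1.le (le_csSup hbd hx₁)
      have hsubA : A ⊆ Set.Ioc t (sSup A) := fun x hx => ⟨hx.1, le_csSup hbd hx⟩
      refine measure_mono_null hsubA ?_
      have hd : ν (Set.Ioc t (sSup A)) = ν (Set.Iic (sSup A)) - ν (Set.Iic t) := by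
        rw [← Set.Iic_sdiff_Iic,
          measure_diff (Set.Iic_subset_Iic.2 hts) nullMeasurableSet_Iic (measure_ne_top _ _)]
      rw [hd, hνIic, hνIic, hFsA]
      simp
    · have h1 : ∀ y, F y ≤ F t := by
        intro y
        obtain ⟨x, hxA, hyx⟩ : ∃ x ∈ A, y ≤ x := by
          by_contra hc
          push_neg at hc
          exact hbd ⟨y, fun x hx => (hc x hx).le⟩
        calc F y ≤ F x := hFmono hyx
          _ = F t := hxA.2
      have hFt1 : F t = 1 :=
        le_antisymm (hF1 t) (le_of_tendsto hFtop (Filter.Eventually.of_forall h1))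
      have hsubA : A ⊆ Set.Ioi t := fun x hx => hx.1
      refine measure_mono_null hsubA ?_
      rw [← Set.compl_Iic, measure_compl measurableSet_Iic (measure_ne_top _ _),
        hνIic, hFt1, measure_univ]
      simp
  -- key identity : tail integral equals K ∘ F
  have lemB : ∀ t : ℝ, (∫ x in Set.Ioi t, (W (F x) - 1) ∂ν) = K (F t) := by
    intro t
    have hgmeas : Measurable fun x => W (F x) - 1 := (hW.comp hFmeas).sub measurable_const
    rw [← MeasureTheory.integral_indicator measurableSet_Ioi]
    have hae : (Set.indicator (Set.Ioi t) fun x => W (F x) - 1)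
        =ᵐ[ν] fun x => Set.indicator (Set.Ioi (F t)) (fun v => W v - 1) (F x) := by
      have hsub : {x | ¬ (Set.indicator (Set.Ioi t) (fun x => W (F x) - 1) x
          = Set.indicator (Set.Ioi (F t)) (fun v => W v - 1) (F x))}
          ⊆ {x | t < x ∧ F x = F t} := by
        intro x hx
        simp only [Set.mem_setOf_eq] at hx ⊢
        rcases lt_or_ge t x with h | h
        · refine ⟨h, ?_⟩
          by_contra hne
          have hlt : F t < F x := lt_of_le_of_ne (hFmono h.le) (Ne.symm hne)
          exact hx (by
            rw [Set.indicator_of_mem (Set.mem_Ioi.2 h), Set.indicator_of_mem (Set.mem_Ioi.2 hlt)])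
        · refine absurd ?_ hx
          rw [Set.indicator_of_notMem (by simpa using not_lt.2 h),
            Set.indicator_of_notMem (by simpa using not_lt.2 (hFmono h))]
      have : ∀ᵐ x ∂ν, Set.indicator (Set.Ioi t) (fun x => W (F x) - 1) x
          = Set.indicator (Set.Ioi (F t)) (fun v => W v - 1) (F x) := by
        rw [MeasureTheory.ae_iff]
        exact measure_mono_null hsub (nullA t)
      exact this
    rw [MeasureTheory.integral_congr_ae hae]
    have hsm : AEStronglyMeasurable (Set.indicator (Set.Ioi (F t)) fun v => W v - 1)
        (Measure.map F ν) :=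
      (((hW.sub measurable_const).indicator measurableSet_Ioi)).aestronglyMeasurable
    rw [← integral_map hFmeas.aemeasurable hsm, hmapF,
      MeasureTheory.integral_indicator measurableSet_Ioi,
      Measure.restrict_restrict measurableSet_Ioi]
    have hset : Set.Ioi (F t) ∩ Set.Ioc 0 1 = Set.Ioc (F t) 1 := by
      ext v
      simp only [Set.mem_inter_iff, Set.mem_Ioi, Set.mem_Ioc]
      exact ⟨fun ⟨h1, _, h3⟩ => ⟨h1, h3⟩,
        fun ⟨h1, h2⟩ => ⟨h1, lt_of_le_of_lt (hF0 t) h1, h2⟩⟩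
    rw [hset, ← intervalIntegral.integral_of_le (hF1 t), hK]
  -- measurability and integrability of the main integrands
  have hIcont : Continuous fun x : ℝ => max (x - a₁) 0 - max (x - a₂) 0 :=
    ((continuous_id.sub continuous_const).max continuous_const).sub
      ((continuous_id.sub continuous_const).max continuous_const)
  have hImeas : Measurable fun x : ℝ => max (x - a₁) 0 - max (x - a₂) 0 := hIcont.measurable
  have hint1 : Integrable (fun ω => (max (X ω - a₁) 0 - max (X ω - a₂) 0) * W (F (X ω))) P := by
    refine Integrable.mono' (integrable_const ((a₂ - a₁) * Cw)) ?_ ?_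
    · exact ((hImeas.comp hX).mul ((hW.comp hFmeas).comp hX)).aestronglyMeasurable
    · refine Filter.Eventually.of_forall fun ω => ?_
      rw [Real.norm_eq_abs, abs_mul]
      exact mul_le_mul (aux_layer_bound a₁ a₂ (X ω) h₁₂) (hWbd _) (abs_nonneg _)
        (by linarith)
  have hint2 : Integrable (fun ω => max (X ω - a₁) 0 - max (X ω - a₂) 0) P := by
    refine Integrable.mono' (integrable_const (a₂ - a₁)) ?_ ?_
    · exact (hImeas.comp hX).aestronglyMeasurable
    · exact Filter.Eventually.of_forall fun ω => aux_layer_bound a₁ a₂ (X ω) h₁₂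
  -- chain of equalities
  have e1 : (∫ ω, (max (X ω - a₁) 0 - max (X ω - a₂) 0) * W (F (X ω)) ∂P) -
      (∫ ω, (max (X ω - a₁) 0 - max (X ω - a₂) 0) ∂P)
      = ∫ ω, (max (X ω - a₁) 0 - max (X ω - a₂) 0) * (W (F (X ω)) - 1) ∂P := by
    rw [← integral_sub hint1 hint2]
    exact integral_congr_ae (Filter.Eventually.of_forall fun ω => by ring)
  have hΦmeas : Measurable fun x : ℝ => (max (x - a₁) 0 - max (x - a₂) 0) * (W (F x) - 1) :=
    hImeas.mul ((hW.comp hFmeas).sub measurable_const)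
  have e2 : (∫ ω, (max (X ω - a₁) 0 - max (X ω - a₂) 0) * (W (F (X ω)) - 1) ∂P)
      = ∫ x, (max (x - a₁) 0 - max (x - a₂) 0) * (W (F x) - 1) ∂ν :=
    (integral_map hX.aemeasurable hΦmeas.aestronglyMeasurable).symm
  have e3 : (∫ x, (max (x - a₁) 0 - max (x - a₂) 0) * (W (F x) - 1) ∂ν)
      = ∫ x, (∫ t in Set.Ioc a₁ a₂, Set.indicator (Set.Iio x) (fun _ => (1:ℝ)) t)
          * (W (F x) - 1) ∂ν := by
    refine MeasureTheory.integral_congr_ae (Filter.Eventually.of_forall fun x => ?_)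
    exact congrArg (fun r => r * (W (F x) - 1)) (aux_layer a₁ a₂ x h₁₂).symm
  have e4 : (∫ x, (∫ t in Set.Ioc a₁ a₂, Set.indicator (Set.Iio x) (fun _ => (1:ℝ)) t)
          * (W (F x) - 1) ∂ν)
      = ∫ x, (∫ t in Set.Ioc a₁ a₂,
          Set.indicator (Set.Iio x) (fun _ => (1:ℝ)) t * (W (F x) - 1)) ∂ν := by
    refine MeasureTheory.integral_congr_ae (Filter.Eventually.of_forall fun x => ?_)
    exact (MeasureTheory.integral_mul_const _ _).symm
  haveI : IsFiniteMeasure (volume.restrict (Set.Ioc a₁ a₂)) := by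
    constructor
    rw [Measure.restrict_apply_univ, Real.volume_Ioc]
    exact ENNReal.ofReal_lt_top
  have hswap : (∫ x, (∫ t in Set.Ioc a₁ a₂,
          Set.indicator (Set.Iio x) (fun _ => (1:ℝ)) t * (W (F x) - 1)) ∂ν)
      = ∫ t in Set.Ioc a₁ a₂, ∫ x,
          Set.indicator (Set.Iio x) (fun _ => (1:ℝ)) t * (W (F x) - 1) ∂ν := by
    refine integral_integral_swap ?_
    have hrw : (Function.uncurry fun (x t : ℝ) =>
        Set.indicator (Set.Iio x) (fun _ => (1:ℝ)) t * (W (F x) - 1))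
        = fun p : ℝ × ℝ =>
            Set.indicator {q : ℝ × ℝ | q.2 < q.1} (fun _ => (1:ℝ)) p * (W (F p.1) - 1) := by
      funext p
      by_cases h : p.2 < p.1
      · simp [Function.uncurry, Set.indicator, h]
      · simp [Function.uncurry, Set.indicator, h]
    rw [hrw]
    refine Integrable.mono' (integrable_const (Cw + 1)) ?_ ?_
    · exact ((measurable_const.indicator
        (measurableSet_lt measurable_snd measurable_fst)).mul
        (((hW.comp hFmeas).comp measurable_fst).sub measurable_const)).aestronglyMeasurable
    · refine Filter.Eventually.of_forall fun p => ?_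
      rw [Real.norm_eq_abs, abs_mul]
      have hi : |Set.indicator {q : ℝ × ℝ | q.2 < q.1} (fun _ => (1:ℝ)) p| ≤ 1 := by
        by_cases h : p ∈ {q : ℝ × ℝ | q.2 < q.1}
        · rw [Set.indicator_of_mem h]; norm_num
        · rw [Set.indicator_of_notMem h]; norm_num
      have hw : |W (F p.1) - 1| ≤ Cw + 1 := by
        have := hWbd (F p.1)
        have := abs_sub_abs_le_abs_sub (W (F p.1)) 1
        have h3 := abs_sub (W (F p.1)) 1
        calc |W (F p.1) - 1| ≤ |W (F p.1)| + |(1:ℝ)| := abs_sub _ _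
          _ ≤ Cw + 1 := by simp; linarith [hWbd (F p.1)]
      calc |Set.indicator {q : ℝ × ℝ | q.2 < q.1} (fun _ => (1:ℝ)) p| * |W (F p.1) - 1|
          ≤ 1 * (Cw + 1) := mul_le_mul hi hw (abs_nonneg _) (by norm_num)
        _ = Cw + 1 := one_mul _
  have e5 : (∫ t in Set.Ioc a₁ a₂, ∫ x,
          Set.indicator (Set.Iio x) (fun _ => (1:ℝ)) t * (W (F x) - 1) ∂ν)
      = ∫ t in Set.Ioc a₁ a₂, K (F t) := by
    refine MeasureTheory.integral_congr_ae (Filter.Eventually.of_forall fun t => ?_)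
    have hrw : ∀ x, Set.indicator (Set.Iio x) (fun _ => (1:ℝ)) t * (W (F x) - 1)
        = Set.indicator (Set.Ioi t) (fun x => W (F x) - 1) x := by
      intro x
      by_cases h : t < x
      · rw [Set.indicator_of_mem (Set.mem_Iio.2 h), Set.indicator_of_mem (Set.mem_Ioi.2 h),
          one_mul]
      · rw [Set.indicator_of_notMem (by simpa using h),
          Set.indicator_of_notMem (by simpa using h), zero_mul]
    calc ∫ x, Set.indicator (Set.Iio x) (fun _ => (1:ℝ)) t * (W (F x) - 1) ∂ν
        = ∫ x, Set.indicator (Set.Ioi t) (fun x => W (F x) - 1) x ∂ν :=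
          MeasureTheory.integral_congr_ae (Filter.Eventually.of_forall hrw)
      _ = ∫ x in Set.Ioi t, (W (F x) - 1) ∂ν :=
          MeasureTheory.integral_indicator measurableSet_Ioi
      _ = K (F t) := lemB t
  rw [e1, e2, e3, e4, hswap, e5, intervalIntegral.integral_of_le h₁₂]
end

section
/- Let X be a nonnegative random variable with continuous strictly increasing distribution function F, let ε ∈ (0,1) and x_ε its (1−ε)-percentile (so F(x_ε) = 1 − ε). Let W : [0,1] → ℝ be nondecreasing and integrable with K(u) = ∫_u^1 (W(v) − 1)dv satisfying K(0) ≥ 0, let λ, β ≥ 0, and define ψ_v(x) = −K(F(x)) + (λ + β)·1{x ≤ x_ε}. Then: (i) ψ_v(x_ε) = −K(1−ε) + λ + β, which is strictly positive whenever K(1−ε) < λ + β; and (ii) ψ_v(x) = −K(F(x)) ≤ 0 for every x > x_ε. -/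
open MeasureTheory intervalIntegral

/-- Let `F` be a continuous, strictly increasing (on `[0,∞)`)
distribution function with values in `[0,1]`, `ε ∈ (0,1)` and `x_ε` its `(1−ε)`-percentile
(`F x_ε = 1 − ε`). Let `W : [0,1] → ℝ` be nondecreasing and integrable with
`K u = ∫_u^1 (W v − 1) dv` and `K 0 ≥ 0`, let `λ, β ≥ 0` and
`ψ_v(x) = −K(F x) + (λ+β)·1{x ≤ x_ε}`. Then (i) `ψ_v(x_ε) = −K(1−ε) + λ + β`, which is
strictly positive whenever `K(1−ε) < λ + β`; and (ii) `ψ_v(x) = −K(F x) ≤ 0` for every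
`x > x_ε`. -/
theorem psiV_sign_change_at_percentile
    (W : ℝ → ℝ) (hWmono : MonotoneOn W (Set.Icc 0 1))
    (hWint : IntervalIntegrable W volume 0 1)
    (K : ℝ → ℝ) (hK : ∀ u, K u = ∫ v in u..1, (W v - 1)) (hK0 : 0 ≤ K 0)
    (F : ℝ → ℝ) (hFcont : Continuous F) (hFmono : StrictMonoOn F (Set.Ici 0))
    (hF01 : ∀ x, F x ∈ Set.Icc (0 : ℝ) 1)
    (ε : ℝ) (hε : ε ∈ Set.Ioo (0 : ℝ) 1)
    (xε : ℝ) (hxε : F xε = 1 - ε)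
    (lam β : ℝ) (hlam : 0 ≤ lam) (hβ : 0 ≤ β)
    (ψv : ℝ → ℝ)
    (hψv : ∀ x, ψv x = -K (F x) + (lam + β) * (if x ≤ xε then 1 else 0)) :
    ψv xε = -K (1 - ε) + (lam + β) ∧
    (K (1 - ε) < lam + β → 0 < ψv xε) ∧
    (∀ x, xε < x → ψv x = -K (F x) ∧ ψv x ≤ 0) := by
  set g : ℝ → ℝ := fun v => W v - 1 with hg
  have hgint : IntervalIntegrable g volume 0 1 := hWint.sub intervalIntegrable_const
  have hKnonneg : ∀ u ∈ Set.Icc (0 : ℝ) 1, 0 ≤ K u := by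
    intro u hu
    obtain ⟨hu0, hu1⟩ := hu
    have hsub1 : IntervalIntegrable g volume 0 u :=
      hgint.mono_set (Set.uIcc_subset_uIcc (by simp) (by simp [Set.mem_uIcc, hu0, hu1]))
    have hsub2 : IntervalIntegrable g volume u 1 :=
      hgint.mono_set (Set.uIcc_subset_uIcc (by simp [Set.mem_uIcc, hu0, hu1]) (by simp))
    have hsplit : (∫ v in (0:ℝ)..u, g v) + (∫ v in u..1, g v) = ∫ v in (0:ℝ)..1, g v :=
      intervalIntegral.integral_add_adjacent_intervals hsub1 hsub2
    have hA : (∫ v in (0:ℝ)..u, g v) ≤ u * g u := by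
      have h := intervalIntegral.integral_mono_on (f := g) (g := fun _ => g u)
        hu0 hsub1 intervalIntegrable_const
        (fun v hv => by
          have hWle : W v ≤ W u := hWmono ⟨hv.1, le_trans hv.2 hu1⟩ ⟨hu0, hu1⟩ hv.2
          show W v - 1 ≤ W u - 1
          linarith)
      have h2 : (∫ v in (0:ℝ)..u, g v) ≤ u * W u - u := by
        have h' : (∫ v in (0:ℝ)..u, g v) ≤ u * g u := by simpa using h
        have hgu : g u = W u - 1 := rfl
        rw [hgu] at h'; linarith
      show (∫ v in (0:ℝ)..u, g v) ≤ u * (W u - 1)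
      linarith
    have hB : (1 - u) * g u ≤ ∫ v in u..1, g v := by
      have h := intervalIntegral.integral_mono_on (f := fun _ => g u) (g := g)
        hu1 intervalIntegrable_const hsub2
        (fun v hv => by
          have hWle : W u ≤ W v := hWmono ⟨hu0, hu1⟩ ⟨le_trans hu0 hv.1, hv.2⟩ hv.1
          show W u - 1 ≤ W v - 1
          linarith)
      have h2 : (1 - u) * W u ≤ (∫ v in u..1, g v) + (1 - u) := by
        have h' : (1 - u) * g u ≤ ∫ v in u..1, g v := by simpa using h
        have hgu : g u = W u - 1 := rfl
        rw [hgu] at h'; linarith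
      show (1 - u) * (W u - 1) ≤ ∫ v in u..1, g v
      linarith
    have hK0' : 0 ≤ ∫ v in (0:ℝ)..1, g v := by
      have := hK 0; rw [this] at hK0; simpa [hg] using hK0
    have hKu : K u = ∫ v in u..1, g v := hK u
    rw [hKu]
    nlinarith [hA, hB, hsplit, mul_nonneg hu0 (sub_nonneg.mpr hu1)]
  have h1 : ψv xε = -K (1 - ε) + (lam + β) := by
    rw [hψv, hxε, if_pos le_rfl]; ring
  refine ⟨h1, fun h => by rw [h1]; linarith, fun x hx => ?_⟩
  have hne : ¬ x ≤ xε := not_le.mpr hx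
  have h2 : ψv x = -K (F x) := by rw [hψv, if_neg hne]; ring
  exact ⟨h2, by rw [h2]; linarith [hKnonneg (F x) (hF01 x)]⟩
end
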